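/- arXiv:2101.03119 — 2 statements merged into one kernel-verified Lean document; each statement's English description precedes it below -/
import Mathlib

section
/- An element x ∈ ℤ^n is a real root of degree 1 (i.e. x ∈ W·β and deg(x) = 1) if and only if every coordinate x_i lies in {0, 1} and exactly k of the coordinates equal 1 (equivalently, dec(x) = β). -/
open Finset

/-- `stdE n m` is the standard basis vector `e_m` (1-based index `m`) of `ℚ^n`. -/
def stdE (n m : ℕ) : Fin n → ℚ := fun j => if (j : ℕ) + 1 = m then 1 else 0

/-- the simple root `α_i = e_{i+1} - e_i` (1-based, for `1 ≤ i ≤ n-1`). -/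
def alphaRoot (n i : ℕ) : Fin n → ℚ := stdE n (i + 1) - stdE n i

/-- the simple root `β = e_1 + ⋯ + e_k`. -/
def betaRoot (n k : ℕ) : Fin n → ℚ := fun j => if (j : ℕ) < k then 1 else 0

/-- the quadratic form `q(x) = Σ x_i² + ((2-k)/k²)(Σ x_i)²`. -/
def qform (n k : ℕ) (x : Fin n → ℚ) : ℚ :=
  (∑ i, (x i) ^ 2) + ((2 - (k : ℚ)) / (k : ℚ) ^ 2) * (∑ i, x i) ^ 2

/-- the inner product obtained as the polarization of `q`. -/
def ip (n k : ℕ) (x y : Fin n → ℚ) : ℚ :=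
  (qform n k (x + y) - qform n k x - qform n k y) / 2

/-- the degree `deg(x) = (x_1 + ⋯ + x_n)/k`. -/
def degv (n k : ℕ) (x : Fin n → ℚ) : ℚ := (∑ i, x i) / (k : ℚ)

/-- `r(x) = x_{k+1} + ⋯ + x_n - 2 deg(x)`. -/
def rco (n k : ℕ) (x : Fin n → ℚ) : ℚ :=
  (∑ i ∈ Finset.univ.filter (fun i : Fin n => k ≤ (i : ℕ)), x i) - 2 * degv n k x

/-- the reflection `s_β : x ↦ x + r(x)·β`. -/
def sBeta (n k : ℕ) (x : Fin n → ℚ) : Fin n → ℚ := x + rco n k x • betaRoot n k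

/-- the map swapping coordinates `a` and `b` (0-based). -/
def sSwap (n : ℕ) (a b : Fin n) (x : Fin n → ℚ) : Fin n → ℚ := x ∘ Equiv.swap a b

/-- The Weyl group: the subgroup of bijections of `ℚ^n` generated by the simple
reflections `s_1, …, s_{n-1}` (as functions: `sSwap` of adjacent coordinates,
0-based) and `s_β` (as a function: `sBeta`). -/
def weyl (n k : ℕ) : Subgroup (Equiv.Perm (Fin n → ℚ)) :=
  Subgroup.closure
    {σ | ⇑σ = sBeta n k ∨ ∃ a b : Fin n, (a : ℕ) + 1 = (b : ℕ) ∧ ⇑σ = sSwap n a b}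

/-- The set of real roots: the orbit `W·β`. -/
def realRoots (n k : ℕ) : Set (Fin n → ℚ) :=
  {x | ∃ σ ∈ weyl n k, σ (betaRoot n k) = x}

/-- `dec x`: the coordinates of `x` rearranged in weakly decreasing order. -/
def dec {n : ℕ} (x : Fin n → ℚ) : Fin n → ℚ := fun i => x (Tuple.sort x i.rev)

lemma card_filter_lt (n k : ℕ) (hkn : k < n) :
    (Finset.univ.filter (fun i : Fin n => (i : ℕ) < k)).card = k := by
  have : (Finset.univ.filter (fun i : Fin n => (i : ℕ) < k)) = Finset.Iio ⟨k, hkn⟩ := by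
    ext i; simp [Fin.lt_def]
  rw [this, Fin.card_Iio]

lemma qform_sBeta (n k : ℕ) (hk : 1 ≤ k) (hkn : k < n) (x : Fin n → ℚ) :
    qform n k (sBeta n k x) = qform n k x := by
  have hk0 : (k : ℚ) ≠ 0 := Nat.cast_ne_zero.mpr (by omega)
  set S := ∑ i, x i with hS
  set T := ∑ i ∈ Finset.univ.filter (fun i : Fin n => k ≤ (i : ℕ)), x i with hT
  have hsplit : ∀ f : Fin n → ℚ, ∑ i, f i =
      (∑ i ∈ Finset.univ.filter (fun i : Fin n => (i : ℕ) < k), f i) +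
      (∑ i ∈ Finset.univ.filter (fun i : Fin n => k ≤ (i : ℕ)), f i) := by
    intro f
    rw [← Finset.sum_filter_add_sum_filter_not Finset.univ (fun i : Fin n => (i : ℕ) < k)]
    congr 1
    apply Finset.sum_congr _ (fun _ _ => rfl)
    apply Finset.filter_congr; intro i _; simp [not_lt]
  set r := rco n k x with hr
  have hcoord : ∀ i : Fin n, sBeta n k x i = x i + r * (if (i : ℕ) < k then 1 else 0) := by
    intro i; simp [sBeta, betaRoot]; rfl
  have hU : (∑ i ∈ Finset.univ.filter (fun i : Fin n => (i : ℕ) < k), x i) = S - T := by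
    rw [hS, hsplit x]; ring
  have hsum : ∑ i, sBeta n k x i = S + (k : ℚ) * r := by
    rw [hsplit (sBeta n k x)]
    have h1 : ∑ i ∈ Finset.univ.filter (fun i : Fin n => (i : ℕ) < k), sBeta n k x i
        = (S - T) + (k:ℚ) * r := by
      rw [← hU]
      rw [Finset.sum_congr rfl (fun i hi => by
        rw [hcoord i, if_pos (Finset.mem_filter.mp hi).2])]
      rw [Finset.sum_add_distrib, Finset.sum_const, card_filter_lt n k hkn]
      ring
    have h2 : ∑ i ∈ Finset.univ.filter (fun i : Fin n => k ≤ (i : ℕ)), sBeta n k x i = T := by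
      rw [hT]
      apply Finset.sum_congr rfl
      intro i hi
      rw [hcoord i, if_neg (by simpa [not_lt] using (Finset.mem_filter.mp hi).2)]
      ring
    rw [h1, h2]; ring
  have hsq : ∑ i, (sBeta n k x i) ^ 2 = (∑ i, (x i)^2) + 2 * r * (S - T) + (k:ℚ) * r ^ 2 := by
    rw [hsplit (fun i => (sBeta n k x i)^2), hsplit (fun i => (x i)^2)]
    have h1 : ∑ i ∈ Finset.univ.filter (fun i : Fin n => (i : ℕ) < k), (sBeta n k x i)^2
        = (∑ i ∈ Finset.univ.filter (fun i : Fin n => (i : ℕ) < k), (x i)^2)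
          + 2 * r * (S - T) + (k:ℚ) * r ^ 2 := by
      rw [Finset.sum_congr rfl (fun i hi => by
        rw [hcoord i, if_pos (Finset.mem_filter.mp hi).2])]
      have : ∀ i : Fin n, (x i + r * 1)^2 = (x i)^2 + 2*r*(x i) + r^2 := by intro i; ring
      rw [Finset.sum_congr rfl (fun i _ => this i), Finset.sum_add_distrib,
        Finset.sum_add_distrib, Finset.sum_const, card_filter_lt n k hkn, ← Finset.mul_sum, hU]
      ring
    have h2 : ∑ i ∈ Finset.univ.filter (fun i : Fin n => k ≤ (i : ℕ)), (sBeta n k x i)^2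
        = ∑ i ∈ Finset.univ.filter (fun i : Fin n => k ≤ (i : ℕ)), (x i)^2 := by
      apply Finset.sum_congr rfl
      intro i hi
      rw [hcoord i, if_neg (by simpa [not_lt] using (Finset.mem_filter.mp hi).2)]
      ring
    rw [h1, h2]; ring
  have hrval : r = T - 2 * S / k := by
    rw [hr, rco, degv, ← hT, ← hS]; ring
  rw [qform, qform, hsq, hsum, ← hS, hrval]
  field_simp
  ring

lemma qform_sSwap (n k : ℕ) (a b : Fin n) (x : Fin n → ℚ) :
    qform n k (sSwap n a b x) = qform n k x := by
  unfold qform sSwap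
  simp only [Function.comp_apply]
  rw [Equiv.sum_comp (Equiv.swap a b) (fun i => (x i)^2),
    Equiv.sum_comp (Equiv.swap a b) x]

lemma sum_betaRoot (n k : ℕ) (hkn : k < n) : ∑ i, betaRoot n k i = (k : ℚ) := by
  unfold betaRoot
  rw [Finset.sum_ite, Finset.sum_const, Finset.sum_const]
  simp [card_filter_lt n k hkn]

lemma qform_betaRoot (n k : ℕ) (hk : 1 ≤ k) (hkn : k < n) :
    qform n k (betaRoot n k) = 2 := by
  have hk0 : (k : ℚ) ≠ 0 := Nat.cast_ne_zero.mpr (by omega)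
  have hsq : ∑ i, (betaRoot n k i)^2 = (k : ℚ) := by
    rw [← sum_betaRoot n k hkn]
    apply Finset.sum_congr rfl
    intro i _
    unfold betaRoot
    split <;> norm_num
  rw [qform, hsq, sum_betaRoot n k hkn]
  field_simp
  ring

lemma qform_weyl (n k : ℕ) (hk : 1 ≤ k) (hkn : k < n) (σ : Equiv.Perm (Fin n → ℚ))
    (hσ : σ ∈ weyl n k) (x : Fin n → ℚ) : qform n k (σ x) = qform n k x := by
  induction hσ using Subgroup.closure_induction generalizing x with
  | mem τ hτ =>
    rcases hτ with h | ⟨a, b, _, h⟩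
    · rw [h]; exact qform_sBeta n k hk hkn x
    · rw [h]; exact qform_sSwap n k a b x
  | one => simp
  | mul τ ρ _ _ hτ hρ => simp only [Equiv.Perm.mul_apply]; rw [hτ, hρ]
  | inv τ _ hτ =>
    have := hτ (τ⁻¹ x)
    simpa using this.symm

/-- the monoid hom from permutations of indices to permutations of `ℚ^n` -/
def permHom (n : ℕ) : Equiv.Perm (Fin n) →* Equiv.Perm (Fin n → ℚ) :=
  MonoidHom.mk' (fun π => Equiv.arrowCongr π (Equiv.refl ℚ)) (by
    intro π τ
    ext x i
    simp only [Equiv.arrowCongr_apply, Equiv.Perm.mul_apply, Equiv.coe_refl,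
      Function.comp_apply, id_eq]
    rw [show Equiv.symm (π * τ) = (π * τ)⁻¹ from rfl, mul_inv_rev]
    rfl)

lemma permHom_apply (n : ℕ) (π : Equiv.Perm (Fin n)) (x : Fin n → ℚ) :
    permHom n π x = x ∘ π.symm := by
  ext i; simp [permHom, Equiv.arrowCongr]

lemma permHom_mem_weyl (n k : ℕ) (hn : 2 ≤ n) (π : Equiv.Perm (Fin n)) :
    permHom n π ∈ weyl n k := by
  obtain ⟨m, rfl⟩ : ∃ m, n = m + 1 := ⟨n - 1, by omega⟩
  have hπ : π ∈ Submonoid.closure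
      (Set.range fun i : Fin m ↦ Equiv.swap i.castSucc i.succ) := by
    rw [Equiv.Perm.mclosure_swap_castSucc_succ]; trivial
  induction hπ using Submonoid.closure_induction with
  | one => simp [map_one, Subgroup.one_mem]
  | mul a b _ _ ha hb => rw [map_mul]; exact Subgroup.mul_mem _ ha hb
  | mem τ hτ =>
    obtain ⟨i, rfl⟩ := hτ
    apply Subgroup.subset_closure
    right
    refine ⟨i.castSucc, i.succ, by simp, ?_⟩
    ext x j
    rw [permHom_apply]
    simp [sSwap, Equiv.symm_swap]

theorem degree_one_real_roots (n k : ℕ) (hn : 2 ≤ n) (hk : 1 ≤ k) (hkn : k < n)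
    (x : Fin n → ℤ) :
    ((fun i => (x i : ℚ)) ∈ realRoots n k ∧ degv n k (fun i => (x i : ℚ)) = 1) ↔
      ((∀ i, x i = 0 ∨ x i = 1) ∧ (Finset.univ.filter (fun i => x i = 1)).card = k) := by
  have hk0 : (k : ℚ) ≠ 0 := Nat.cast_ne_zero.mpr (by omega)
  constructor
  · rintro ⟨⟨σ, hσ, hσβ⟩, hdeg⟩
    have hq : qform n k (fun i => (x i : ℚ)) = 2 := by
      rw [← hσβ, qform_weyl n k hk hkn σ hσ, qform_betaRoot n k hk hkn]
    have hsum : ∑ i, (x i : ℚ) = (k : ℚ) := by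
      rw [degv, div_eq_one_iff_eq hk0] at hdeg
      exact hdeg
    have hsq : ∑ i, ((x i : ℚ))^2 = (k : ℚ) := by
      rw [qform, hsum] at hq
      field_simp at hq
      linarith
    have hsumZ : ∑ i, x i = (k : ℤ) := by
      have : ((∑ i, x i : ℤ) : ℚ) = (k : ℚ) := by push_cast; exact hsum
      exact_mod_cast this
    have hsqZ : ∑ i, (x i)^2 = (k : ℤ) := by
      have : ((∑ i, (x i)^2 : ℤ) : ℚ) = (k : ℚ) := by push_cast; exact hsq
      exact_mod_cast this
    have hzero : ∑ i, ((x i)^2 - x i) = 0 := by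
      rw [Finset.sum_sub_distrib, hsumZ, hsqZ]; ring
    have hnonneg : ∀ i ∈ Finset.univ, (0:ℤ) ≤ (x i)^2 - x i := by
      intro i _
      rcases le_or_gt (x i) 0 with h | h
      · nlinarith [sq_nonneg (x i)]
      · have h1 : 1 ≤ x i := h
        nlinarith
    have heach := (Finset.sum_eq_zero_iff_of_nonneg hnonneg).mp hzero
    have h01 : ∀ i, x i = 0 ∨ x i = 1 := by
      intro i
      have := heach i (Finset.mem_univ i)
      have hmul : x i * (x i - 1) = 0 := by linear_combination this
      rcases mul_eq_zero.mp hmul with h | h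
      · exact Or.inl h
      · exact Or.inr (by linarith)
    refine ⟨h01, ?_⟩
    have hsum_card : ∑ i, x i = ((Finset.univ.filter (fun i => x i = 1)).card : ℤ) := by
      rw [← Finset.sum_filter_add_sum_filter_not Finset.univ (fun i => x i = 1)]
      have h1 : ∑ i ∈ Finset.univ.filter (fun i => x i = 1), x i
          = ((Finset.univ.filter (fun i => x i = 1)).card : ℤ) := by
        rw [Finset.sum_congr rfl (fun i hi => (Finset.mem_filter.mp hi).2)]
        simp
      have h2 : ∑ i ∈ Finset.univ.filter (fun i => ¬ x i = 1), x i = 0 := by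
        apply Finset.sum_eq_zero
        intro i hi
        rcases h01 i with h | h
        · exact h
        · exact absurd h (Finset.mem_filter.mp hi).2
      rw [h1, h2]; ring
    have : ((Finset.univ.filter (fun i => x i = 1)).card : ℤ) = (k : ℤ) := by
      rw [← hsum_card]; exact hsumZ
    exact_mod_cast this
  · rintro ⟨h01, hcard⟩
    have hcardB := card_filter_lt n k hkn
    have hA : Fintype.card {i : Fin n // x i = 1} = k := by
      rw [Fintype.card_subtype]; exact hcard
    have hB : Fintype.card {i : Fin n // (i : ℕ) < k} = k := by
      rw [Fintype.card_subtype]; exact hcardB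
    have hAc : Fintype.card {i : Fin n // ¬ x i = 1} = n - k := by
      rw [Fintype.card_subtype_compl, hA, Fintype.card_fin]
    have hBc : Fintype.card {i : Fin n // ¬ (i : ℕ) < k} = n - k := by
      rw [Fintype.card_subtype_compl, hB, Fintype.card_fin]
    have eA : {i : Fin n // x i = 1} ≃ {i : Fin n // (i : ℕ) < k} :=
      Fintype.equivOfCardEq (by rw [hA, hB])
    have eC : {i : Fin n // ¬ x i = 1} ≃ {i : Fin n // ¬ (i : ℕ) < k} :=
      Fintype.equivOfCardEq (by rw [hAc, hBc])
    set π : Equiv.Perm (Fin n) :=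
      ((Equiv.sumCompl (fun i : Fin n => x i = 1)).symm.trans
        ((Equiv.sumCongr eA eC).trans
          (Equiv.sumCompl (fun i : Fin n => (i : ℕ) < k)))) with hπ
    have hπ_prop : ∀ i : Fin n, ((π i : Fin n) : ℕ) < k ↔ x i = 1 := by
      intro i
      by_cases h : x i = 1
      · have hpi : π i = ((eA ⟨i, h⟩ : {j : Fin n // (j : ℕ) < k}) : Fin n) := by
          simp only [hπ, Equiv.trans_apply]
          rw [Equiv.sumCompl_symm_apply_of_pos (p := fun j : Fin n => x j = 1) (a := i) h]
          rfl
        rw [hpi]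
        exact ⟨fun _ => h, fun _ => (eA ⟨i, h⟩).2⟩
      · have hpi : π i = ((eC ⟨i, h⟩ : {j : Fin n // ¬ (j : ℕ) < k}) : Fin n) := by
          simp only [hπ, Equiv.trans_apply]
          rw [Equiv.sumCompl_symm_apply_of_neg (p := fun j : Fin n => x j = 1) (a := i) h]
          rfl
        rw [hpi]
        exact ⟨fun hh => absurd hh (eC ⟨i, h⟩).2, fun hh => absurd hh h⟩
    refine ⟨⟨permHom n π⁻¹, permHom_mem_weyl n k hn π⁻¹, ?_⟩, ?_⟩
    · ext i
      rw [permHom_apply]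
      simp only [Function.comp_apply]
      show betaRoot n k (π i) = (x i : ℚ)
      unfold betaRoot
      rcases h01 i with h | h
      · rw [if_neg (by rw [hπ_prop i, h]; norm_num), h]; norm_num
      · rw [if_pos ((hπ_prop i).mpr h), h]; norm_num
    · rw [degv, div_eq_one_iff_eq hk0]
      have : ∑ i, (x i : ℚ) = ((∑ i, x i : ℤ) : ℚ) := by push_cast; rfl
      rw [this]
      have hsum_card : ∑ i, x i = ((Finset.univ.filter (fun i => x i = 1)).card : ℤ) := by
        rw [← Finset.sum_filter_add_sum_filter_not Finset.univ (fun i => x i = 1)]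
        have h1 : ∑ i ∈ Finset.univ.filter (fun i => x i = 1), x i
            = ((Finset.univ.filter (fun i => x i = 1)).card : ℤ) := by
          rw [Finset.sum_congr rfl (fun i hi => (Finset.mem_filter.mp hi).2)]
          simp
        have h2 : ∑ i ∈ Finset.univ.filter (fun i => ¬ x i = 1), x i = 0 := by
          apply Finset.sum_eq_zero
          intro i hi
          rcases h01 i with h | h
          · exact h
          · exact absurd h (Finset.mem_filter.mp hi).2
        rw [h1, h2]; ring
      rw [hsum_card, hcard]
      push_cast; rfl
end

section
/- For all integers d, d' ≥ 2 with n ≥ k + 2·max(d, d') − 1, the inner product of the roots γ_d and γ_{d'} equals (γ_d, γ_{d'}) = 2 − |d − d'|, where γ_d ∈ ℤ^n is the vector whose first k−3 coordinates equal d, whose (k−2)-nd coordinate equals d−1, whose coordinates in positions k−1 through k+2d−1 equal 1, and whose remaining coordinates equal 0. -/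
open Finset

/-- The root `γ_d`: first `k-3` coordinates equal `d`, coordinate `k-2` equals `d-1`,
coordinates `k-1` through `k+2d-1` equal `1`, the rest are `0` (1-based positions). -/
def gammaRoot (n k d : ℕ) : Fin n → ℚ := fun j =>
  if (j : ℕ) + 1 ≤ k - 3 then (d : ℚ)
  else if (j : ℕ) + 1 = k - 2 then (d : ℚ) - 1
  else if (j : ℕ) + 1 ≤ k + 2 * d - 1 then 1 else 0


lemma sum_three (n a b : ℕ) (A B C : ℚ) (hab : a < b) (hb : b ≤ n) :
    ∑ i ∈ Finset.range n, (if i < a then A else if i = a then B else if i < b then C else 0)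
      = a * A + B + ((b - a - 1 : ℕ) : ℚ) * C := by
  set f : ℕ → ℚ := fun i => if i < a then A else if i = a then B else if i < b then C else 0
    with hf
  have h0 : ∑ i ∈ Finset.range n, f i = ∑ i ∈ Finset.range b, f i := by
    refine (Finset.sum_subset (Finset.range_subset_range.mpr hb) ?_).symm
    intro x _ hx
    simp only [Finset.mem_range, not_lt] at hx
    simp only [hf]
    rw [if_neg (by omega), if_neg (by omega), if_neg (by omega)]
  have h1 : ∑ i ∈ Finset.range a, f i = a * A := by
    have : ∀ i ∈ Finset.range a, f i = A := by
      intro i hi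
      simp only [hf]
      rw [if_pos (Finset.mem_range.mp hi)]
    rw [Finset.sum_congr rfl this, Finset.sum_const, Finset.card_range, nsmul_eq_mul]
  have h2 : f a = B := by
    simp [hf]
  have h3 : ∑ i ∈ Finset.Ico (a+1) b, f i = ((b - a - 1 : ℕ) : ℚ) * C := by
    have : ∀ i ∈ Finset.Ico (a+1) b, f i = C := by
      intro i hi
      simp only [Finset.mem_Ico] at hi
      simp only [hf]
      rw [if_neg (by omega), if_neg (by omega), if_pos hi.2]
    rw [Finset.sum_congr rfl this, Finset.sum_const, Nat.card_Ico, nsmul_eq_mul,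
      Nat.sub_sub]
  rw [h0, Finset.range_eq_Ico, ← Finset.sum_Ico_consecutive f (Nat.zero_le (a+1)) hab,
    ← Finset.range_eq_Ico, Finset.sum_range_succ, h1, h2, h3]

lemma ip_eq (n k : ℕ) (x y : Fin n → ℚ) :
    ip n k x y = (∑ i, x i * y i)
      + ((2 - (k : ℚ)) / (k : ℚ) ^ 2) * (∑ i, x i) * (∑ i, y i) := by
  unfold ip qform
  simp only [Pi.add_apply]
  have h1 : ∑ i : Fin n, (x i + y i) ^ 2
      = (∑ i, x i ^ 2) + 2 * (∑ i, x i * y i) + ∑ i, y i ^ 2 := by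
    rw [Finset.mul_sum, ← Finset.sum_add_distrib, ← Finset.sum_add_distrib]
    exact Finset.sum_congr rfl fun i _ => by ring
  have h2 : ∑ i : Fin n, (x i + y i) = (∑ i, x i) + ∑ i, y i :=
    Finset.sum_add_distrib
  rw [h1, h2]; ring

lemma ip_comm (n k : ℕ) (x y : Fin n → ℚ) : ip n k x y = ip n k y x := by
  unfold ip; rw [add_comm]; ring

lemma sum_gamma (n k d : ℕ) (hk : 3 ≤ k) (hd : 1 ≤ d) (hn : k + 2 * d - 1 ≤ n) :
    ∑ i, gammaRoot n k d i = (d : ℚ) * k := by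
  have : ∑ i, gammaRoot n k d i = ∑ i ∈ Finset.range n,
      (if i < k - 3 then (d : ℚ) else if i = k - 3 then (d : ℚ) - 1
        else if i < k + 2 * d - 1 then 1 else 0) := by
    rw [← Fin.sum_univ_eq_sum_range (fun i => if i < k - 3 then (d : ℚ)
      else if i = k - 3 then (d : ℚ) - 1 else if i < k + 2 * d - 1 then 1 else 0)]
    refine Finset.sum_congr rfl fun j _ => ?_
    simp only [gammaRoot]
    split_ifs <;> first | rfl | (exfalso; omega)
  rw [this, sum_three n (k - 3) (k + 2 * d - 1) _ _ _ (by omega) hn]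
  have h1 : k + 2 * d - 1 - (k - 3) - 1 = 2 * d + 1 := by omega
  rw [h1, Nat.cast_sub hk]
  push_cast
  ring

lemma sum_gamma_mul (n k d d' : ℕ) (hk : 3 ≤ k) (hd : 1 ≤ d) (hdd' : d ≤ d')
    (hn : k + 2 * d' - 1 ≤ n) :
    ∑ i, gammaRoot n k d i * gammaRoot n k d' i
      = ((k : ℚ) - 3) * ((d : ℚ) * d') + ((d : ℚ) - 1) * ((d' : ℚ) - 1)
        + (2 * (d : ℚ) + 1) := by
  have : ∑ i, gammaRoot n k d i * gammaRoot n k d' i = ∑ i ∈ Finset.range n,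
      (if i < k - 3 then (d : ℚ) * d' else if i = k - 3 then ((d : ℚ) - 1) * ((d' : ℚ) - 1)
        else if i < k + 2 * d - 1 then 1 else 0) := by
    rw [← Fin.sum_univ_eq_sum_range (fun i => if i < k - 3 then (d : ℚ) * d'
      else if i = k - 3 then ((d : ℚ) - 1) * ((d' : ℚ) - 1)
      else if i < k + 2 * d - 1 then 1 else 0)]
    refine Finset.sum_congr rfl fun j _ => ?_
    simp only [gammaRoot]
    split_ifs <;> first | ring1 | (exfalso; omega)
  rw [this, sum_three n (k - 3) (k + 2 * d - 1) _ _ _ (by omega) (by omega)]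
  have h1 : k + 2 * d - 1 - (k - 3) - 1 = 2 * d + 1 := by omega
  rw [h1, Nat.cast_sub hk]
  push_cast
  ring

lemma ip_gamma_aux (n k d d' : ℕ) (hk : 3 ≤ k) (hd : 2 ≤ d) (hdd' : d ≤ d')
    (hn : k + 2 * d' - 1 ≤ n) :
    ip n k (gammaRoot n k d) (gammaRoot n k d') = 2 - ((d' : ℚ) - d) := by
  have hk0 : (k : ℚ) ≠ 0 := Nat.cast_ne_zero.mpr (by omega)
  rw [ip_eq, sum_gamma n k d hk (by omega) (by omega), sum_gamma n k d' hk (by omega) hn,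
    sum_gamma_mul n k d d' hk (by omega) hdd' hn]
  field_simp
  ring

theorem gammaRoot_inner_products (n k d d' : ℕ) (hk : 3 ≤ k) (hd : 2 ≤ d) (hd' : 2 ≤ d')
    (hn : k + 2 * max d d' - 1 ≤ n) :
    ip n k (gammaRoot n k d) (gammaRoot n k d') = 2 - |(d : ℚ) - (d' : ℚ)| := by
  rcases le_total d d' with h | h
  · rw [max_eq_right h] at hn
    rw [ip_gamma_aux n k d d' hk hd h hn, abs_of_nonpos (by
      have : (d:ℚ) ≤ d' := Nat.cast_le.mpr h; linarith)]
    try ring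
  · rw [max_eq_left h] at hn
    rw [ip_comm, ip_gamma_aux n k d' d hk hd' h hn, abs_of_nonneg (by
      have : (d':ℚ) ≤ d := Nat.cast_le.mpr h; linarith)]
    try ring
end
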